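/- For every strategy profile s of the 0,1-game (i.e., with S0(s) or S1(s)), if s is a subgame perfect equilibrium (SPE(s)) then SAcBes(s) or SBcAes(s) holds. -/

import Mathlib

/-- The two agents of the game. -/
inductive Agent : Type
  | A
  | B

/-- The two choices: down and right. -/
inductive Choice : Type
  | d
  | r

/-- Payoff assignments for the agents. -/
abbrev Payoffs : Type := Agent → ℝ

/-! ### Strategy profiles: final coalgebra of `X ↦ ℝ^P + P × Choice × X × X` -/

def StratProfF : PFunctor.{0} :=
  ⟨Payoffs ⊕ (Agent × Choice), fun x =>
    match x with
    | Sum.inl _ => Empty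
    | Sum.inr _ => Bool⟩

/-- Strategy profiles: the final coalgebra (M-type) of `StratProfF`. -/
abbrev StratProf : Type := StratProfF.M

/-- Leaf strategy profile `⟨⟨f⟩⟩`. -/
def sleaf (f : Payoffs) : StratProf :=
  PFunctor.M.mk ⟨Sum.inl f, fun (e : Empty) => e.elim⟩

/-- Node strategy profile `⟨⟨p, c, s_d, s_r⟩⟩` (`true` child = down, `false` child = right). -/
def snode (p : Agent) (c : Choice) (sd sr : StratProf) : StratProf :=
  PFunctor.M.mk ⟨Sum.inr (p, c), fun (b : Bool) => if b then sd else sr⟩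

/-- Convergence `↓s`: the least predicate closed under the given rules. -/
inductive Conv : StratProf → Prop
  | leaf (f : Payoffs) : Conv (sleaf f)
  | down (p : Agent) (sd sr : StratProf) : Conv sd → Conv (snode p Choice.d sd sr)
  | right (p : Agent) (sd sr : StratProf) : Conv sr → Conv (snode p Choice.r sd sr)

/-- One step of the strong-convergence condition. -/
def SConvStep (R : StratProf → Prop) (s : StratProf) : Prop :=
  (∃ f, s = sleaf f) ∨
    ∃ p c sd sr, s = snode p c sd sr ∧ Conv s ∧ R sd ∧ R sr

/-- Strong convergence `⇓s`: the largest predicate `R` with `R ≤ SConvStep R`. -/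
def SConv (s : StratProf) : Prop :=
  ∃ R : StratProf → Prop, R s ∧ ∀ t, R t → SConvStep R t

/-- One step of the `□Φ` condition. -/
def BoxStep (Φ : StratProf → Prop) (R : StratProf → Prop) (t : StratProf) : Prop :=
  Φ t ∧ ∀ p c sd sr, t = snode p c sd sr → R sd ∧ R sr

/-- The modality `□Φ`: the largest predicate `R` with `R ≤ BoxStep Φ R`. -/
def Box (Φ : StratProf → Prop) (s : StratProf) : Prop :=
  ∃ R : StratProf → Prop, R s ∧ ∀ t, R t → BoxStep Φ R t

/-- The partial payoff function `ŝ`, as an inductively defined graph relation: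
`PayoffRel s f` means "`ŝ` is defined and equals `f`". -/
inductive PayoffRel : StratProf → Payoffs → Prop
  | leaf (f : Payoffs) : PayoffRel (sleaf f) f
  | down (p : Agent) (sd sr : StratProf) (f : Payoffs) :
      PayoffRel sd f → PayoffRel (snode p Choice.d sd sr) f
  | right (p : Agent) (sd sr : StratProf) (f : Payoffs) :
      PayoffRel sr f → PayoffRel (snode p Choice.r sd sr) f

/-- Bisimilarity `s' ~ s`: the largest relation satisfying the coinductive clauses. -/
def Bisim (s' s : StratProf) : Prop :=
  ∃ R : StratProf → StratProf → Prop, R s' s ∧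
    ∀ t' t, R t' t →
      ((∃ f, t' = sleaf f ∧ t = sleaf f) ∨
        ∃ p c td' tr' td tr,
          t' = snode p c td' tr' ∧ t = snode p c td tr ∧ R td' td ∧ R tr' tr)

/-- The subprofile relation `s' ≼ s`: the least relation closed under the given rules. -/
inductive Subprof : StratProf → StratProf → Prop
  | bisim {s' s : StratProf} : Bisim s' s → Subprof s' s
  | down {s' : StratProf} {p : Agent} {c : Choice} {sd sr : StratProf} :
      Subprof s' sd → Subprof s' (snode p c sd sr)
  | right {s' : StratProf} {p : Agent} {c : Choice} {sd sr : StratProf} :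
      Subprof s' sr → Subprof s' (snode p c sd sr)

/-! ### Games: final coalgebra of `X ↦ ℝ^P + P × X × X` -/

def GameF : PFunctor.{0} :=
  ⟨Payoffs ⊕ Agent, fun x =>
    match x with
    | Sum.inl _ => Empty
    | Sum.inr _ => Bool⟩

/-- Games: the final coalgebra (M-type) of `GameF`. -/
abbrev Game : Type := GameF.M

/-- Leaf game `⟨f⟩`. -/
def gleaf (f : Payoffs) : Game :=
  PFunctor.M.mk ⟨Sum.inl f, fun (e : Empty) => e.elim⟩

/-- Node game `⟨p, g_d, g_r⟩`. -/
def gnode (p : Agent) (gd gr : Game) : Game :=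
  PFunctor.M.mk ⟨Sum.inr p, fun (b : Bool) => if b then gd else gr⟩

/-- The corecursive function `game : StratProf → Game` erasing the choices. -/
def gameOf : StratProf → Game :=
  PFunctor.M.corec (fun s =>
    match PFunctor.M.dest s with
    | ⟨Sum.inl f, _⟩ => ⟨Sum.inl f, fun (e : Empty) => e.elim⟩
    | ⟨Sum.inr pc, k⟩ => ⟨Sum.inr pc.1, k⟩)

/-! ### Strategies: final coalgebra of `X ↦ ℝ^P + (P + Choice) × X × X` -/

def StratF : PFunctor.{0} :=
  ⟨Payoffs ⊕ (Agent ⊕ Choice), fun x =>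
    match x with
    | Sum.inl _ => Empty
    | Sum.inr _ => Bool⟩

/-- Strategies: the final coalgebra (M-type) of `StratF`. -/
abbrev Strat : Type := StratF.M

/-- Leaf strategy `⟨f⟩`. -/
def stleaf (f : Payoffs) : Strat :=
  PFunctor.M.mk ⟨Sum.inl f, fun (e : Empty) => e.elim⟩

/-- Node strategy `⟨x, st₁, st₂⟩` with `x` an agent or a choice. -/
def stnode (x : Agent ⊕ Choice) (s1 s2 : Strat) : Strat :=
  PFunctor.M.mk ⟨Sum.inr x, fun (b : Bool) => if b then s1 else s2⟩

/-- The corecursive function `st2g` replacing choice labels by the given agent. -/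
def st2gStep (p : Agent) (t : Strat) : GameF.Obj Strat :=
  match PFunctor.M.dest t with
  | ⟨Sum.inl f, _⟩ => ⟨Sum.inl f, fun (e : Empty) => e.elim⟩
  | ⟨Sum.inr (Sum.inl q), k⟩ => ⟨Sum.inr q, k⟩
  | ⟨Sum.inr (Sum.inr _), k⟩ => ⟨Sum.inr p, k⟩

/-- The corecursive function `st2g` replacing choice labels by the given agent. -/
def st2g (st : Strat) (p : Agent) : Game :=
  PFunctor.M.corec (st2gStep p) st

/-- `st` is full for `p`: coinductively, the agent `p` occurs nowhere as a label. -/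
def Full (p : Agent) (st : Strat) : Prop :=
  ∃ R : Strat → Prop, R st ∧ ∀ t, R t →
    (∃ f, t = stleaf f) ∨
      ∃ x s1 s2, t = stnode x s1 s2 ∧ x ≠ Sum.inl p ∧ R s1 ∧ R s2

/-- A one-level view of a strategy. -/
inductive StratView : Type
  | leaf (f : Payoffs)
  | node (x : Agent ⊕ Choice) (k : Bool → Strat)

/-- Destruct a strategy into its one-level view. -/
def stratView (t : Strat) : StratView :=
  match PFunctor.M.dest t with
  | ⟨Sum.inl f, _⟩ => StratView.leaf f
  | ⟨Sum.inr x, k⟩ => StratView.node x k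

/-- One corecursion step for the sum of the strategy of `A` (first component)
and the strategy of `B` (second component). -/
def oplusStep : Strat × Strat → StratProfF.Obj (Strat × Strat) := fun q =>
  match stratView q.1, stratView q.2 with
  | StratView.leaf f, _ => ⟨Sum.inl f, fun (e : Empty) => e.elim⟩
  | StratView.node _ _, StratView.leaf f => ⟨Sum.inl f, fun (e : Empty) => e.elim⟩
  | StratView.node (Sum.inr c) k1, StratView.node (Sum.inl p') k2 =>
      ⟨Sum.inr (p', c), fun (b : Bool) => (k1 b, k2 b)⟩
  | StratView.node (Sum.inr c) k1, StratView.node (Sum.inr _) k2 =>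
      ⟨Sum.inr (Agent.A, c), fun (b : Bool) => (k1 b, k2 b)⟩
  | StratView.node (Sum.inl p') k1, StratView.node (Sum.inr c) k2 =>
      ⟨Sum.inr (p', c), fun (b : Bool) => (k1 b, k2 b)⟩
  | StratView.node (Sum.inl p') k1, StratView.node (Sum.inl _) k2 =>
      ⟨Sum.inr (p', Choice.d), fun (b : Bool) => (k1 b, k2 b)⟩

/-- The sum `st_A ⊕ st_B` of the strategies of the two agents. -/
def oplus (stA stB : Strat) : StratProf :=
  PFunctor.M.corec oplusStep (stA, stB)

/-! ### Equilibria -/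

/-- The local equilibrium condition `PE`. -/
def PE (s : StratProf) : Prop :=
  SConv s ∧
    (∀ p sd sr fd fr, s = snode p Choice.d sd sr →
        PayoffRel sd fd → PayoffRel sr fr → fd p ≥ fr p) ∧
    (∀ p sd sr fd fr, s = snode p Choice.r sd sr →
        PayoffRel sd fd → PayoffRel sr fr → fr p ≥ fd p)

/-- Subgame perfect equilibrium: `SPE = □PE`. -/
def SPE : StratProf → Prop := Box PE

/-- Convertibility `s ⊢p⊣ s'`: the inductively defined deviation relation of agent `p`. -/
inductive Convert (p : Agent) : StratProf → StratProf → Prop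
  | bisim {s s' : StratProf} : Bisim s s' → Convert p s s'
  | own {c c' : Choice} {s1 s2 s1' s2' : StratProf} :
      Convert p s1 s1' → Convert p s2 s2' →
      Convert p (snode p c s1 s2) (snode p c' s1' s2')
  | other {p' : Agent} {c : Choice} {s1 s2 s1' s2' : StratProf} :
      Convert p s1 s1' → Convert p s2 s2' →
      Convert p (snode p' c s1 s2) (snode p' c s1' s2')

/-- Nash equilibrium: no agent can improve her payoff by converting
(the inequality being required whenever both payoffs are defined). -/
def Nash (s : StratProf) : Prop :=
  ∀ p s' f f', Convert p s s' → PayoffRel s f → PayoffRel s' f' → f p ≥ f' p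

/-! ### The 0,1-game -/

/-- The payoff function `A ↦ 0, B ↦ 1`. -/
def f01 : Payoffs := fun p => match p with | Agent.A => 0 | Agent.B => 1

/-- The payoff function `A ↦ 1, B ↦ 0`. -/
def f10 : Payoffs := fun p => match p with | Agent.A => 1 | Agent.B => 0

/-- `S01 true = S0` and `S01 false = S1`: the largest pair of predicates
characterizing the strategy profiles of the 0,1-game. -/
def S01 (i : Bool) (s : StratProf) : Prop :=
  ∃ R : Bool → StratProf → Prop, R i s ∧
    (∀ t, R true t → ∃ c s', t = snode Agent.A c (sleaf f01) s' ∧ R false s') ∧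
    (∀ t, R false t → ∃ c s', t = snode Agent.B c (sleaf f10) s' ∧ R true s')

def S0 : StratProf → Prop := S01 true
def S1 : StratProf → Prop := S01 false

/-- One step of the `AcBes` condition. -/
def AcBesStep (R : StratProf → Prop) (s : StratProf) : Prop :=
  ∀ p c f s', s = snode p c (sleaf f) s' →
    (p = Agent.A ∧ f = f01 ∧ c = Choice.r ∧ R s') ∨
    (p = Agent.B ∧ f = f10 ∧ (c = Choice.d ∨ R s'))

/-- `AcBes`: "A continues and B eventually stops", the least predicate `R`
such that `AcBesStep R ≤ R` (impredicative encoding of the least fixed point). -/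
def AcBes (s : StratProf) : Prop :=
  ∀ R : StratProf → Prop, (∀ t, AcBesStep R t → R t) → R s

/-- One step of the `BcAes` condition. -/
def BcAesStep (R : StratProf → Prop) (s : StratProf) : Prop :=
  ∀ p c f s', s = snode p c (sleaf f) s' →
    (p = Agent.B ∧ f = f10 ∧ c = Choice.r ∧ R s') ∨
    (p = Agent.A ∧ f = f01 ∧ (c = Choice.d ∨ R s'))

/-- `BcAes`: "B continues and A eventually stops", symmetric to `AcBes`. -/
def BcAes (s : StratProf) : Prop :=
  ∀ R : StratProf → Prop, (∀ t, BcAesStep R t → R t) → R s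

def SAcBes : StratProf → Prop := Box AcBes
def SBcAes : StratProf → Prop := Box BcAes

/-! ### The 0,1-game `g01`, the escalation strategies and the all-continue profile -/

/-- Corecursion step for `g01` and `g10`:
`inl true ↦ g01`, `inl false ↦ g10`, `inr true ↦ ⟨f01⟩`, `inr false ↦ ⟨f10⟩`. -/
def g01Step : Bool ⊕ Bool → GameF.Obj (Bool ⊕ Bool)
  | Sum.inl true => ⟨Sum.inr Agent.A, fun (b : Bool) => if b then Sum.inr true else Sum.inl false⟩
  | Sum.inl false => ⟨Sum.inr Agent.B, fun (b : Bool) => if b then Sum.inr false else Sum.inl true⟩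
  | Sum.inr true => ⟨Sum.inl f01, fun (e : Empty) => e.elim⟩
  | Sum.inr false => ⟨Sum.inl f10, fun (e : Empty) => e.elim⟩

/-- The 0,1-game: `g01 = ⟨A, ⟨f01⟩, g10⟩` where `g10 = ⟨B, ⟨f10⟩, g01⟩`. -/
def g01 : Game := PFunctor.M.corec g01Step (Sum.inl true)

/-- `g10 = ⟨B, ⟨f10⟩, g01⟩`. -/
def g10 : Game := PFunctor.M.corec g01Step (Sum.inl false)

/-- Corecursion step for `st_{A,∞} = ⟨r, ⟨f01⟩, ⟨B, ⟨f10⟩, st_{A,∞}⟩⟩`. -/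
def stAinfStep : ℕ → StratF.Obj ℕ
  | 0 => ⟨Sum.inr (Sum.inr Choice.r), fun (b : Bool) => if b then 2 else 1⟩
  | 1 => ⟨Sum.inr (Sum.inl Agent.B), fun (b : Bool) => if b then 3 else 0⟩
  | 2 => ⟨Sum.inl f01, fun (e : Empty) => e.elim⟩
  | _ => ⟨Sum.inl f10, fun (e : Empty) => e.elim⟩

/-- The escalation strategy of `A`: `st_{A,∞} = ⟨r, ⟨f01⟩, ⟨B, ⟨f10⟩, st_{A,∞}⟩⟩`. -/
def stAinf : Strat := PFunctor.M.corec stAinfStep 0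

/-- Corecursion step for `st_{B,∞} = ⟨A, ⟨f01⟩, ⟨r, ⟨f10⟩, st_{B,∞}⟩⟩`. -/
def stBinfStep : ℕ → StratF.Obj ℕ
  | 0 => ⟨Sum.inr (Sum.inl Agent.A), fun (b : Bool) => if b then 2 else 1⟩
  | 1 => ⟨Sum.inr (Sum.inr Choice.r), fun (b : Bool) => if b then 3 else 0⟩
  | 2 => ⟨Sum.inl f01, fun (e : Empty) => e.elim⟩
  | _ => ⟨Sum.inl f10, fun (e : Empty) => e.elim⟩

/-- The escalation strategy of `B`: `st_{B,∞} = ⟨A, ⟨f01⟩, ⟨r, ⟨f10⟩, st_{B,∞}⟩⟩`. -/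
def stBinf : Strat := PFunctor.M.corec stBinfStep 0

/-- Corecursion step for the all-continue profile
`s_{A,∞} = ⟨⟨A, r, ⟨⟨f01⟩⟩, s_{B,∞}⟩⟩`, `s_{B,∞} = ⟨⟨B, r, ⟨⟨f10⟩⟩, s_{A,∞}⟩⟩`. -/
def sAinfStep : ℕ → StratProfF.Obj ℕ
  | 0 => ⟨Sum.inr (Agent.A, Choice.r), fun (b : Bool) => if b then 2 else 1⟩
  | 1 => ⟨Sum.inr (Agent.B, Choice.r), fun (b : Bool) => if b then 3 else 0⟩
  | 2 => ⟨Sum.inl f01, fun (e : Empty) => e.elim⟩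
  | _ => ⟨Sum.inl f10, fun (e : Empty) => e.elim⟩

/-- The all-continue profile `s_{A,∞}` of the 0,1-game. -/
def sAinf : StratProf := PFunctor.M.corec sAinfStep 0

/-- The profile `s_{B,∞}`. -/
def sBinf : StratProf := PFunctor.M.corec sAinfStep 1

/-- `s_□r`, the profile of the 0,1-game where both agents continue forever
(it satisfies `s_□r = ⟨⟨A, r, ⟨⟨f01⟩⟩, ⟨⟨B, r, ⟨⟨f10⟩⟩, s_□r⟩⟩⟩⟩`). -/
def sBoxr : StratProf := sAinf

/-- `s_{d□r} = ⟨⟨A, d, ⟨⟨f01⟩⟩, ⟨⟨B, r, ⟨⟨f10⟩⟩, s_□r⟩⟩⟩⟩`. -/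
def sdBoxr : StratProf :=
  snode Agent.A Choice.d (sleaf f01) (snode Agent.B Choice.r (sleaf f10) sBoxr)

/-! ### Finite games and profiles -/

/-- Finite strategy profiles. -/
inductive FinStratProf : Type
  | leaf (f : Payoffs)
  | node (p : Agent) (c : Choice) (sd sr : FinStratProf)

/-- Finite games. -/
inductive FinGame : Type
  | leaf (f : Payoffs)
  | node (p : Agent) (gd gr : FinGame)

/-- The (total) payoff function of a finite strategy profile. -/
def fpayoff : FinStratProf → Payoffs
  | FinStratProf.leaf f => f
  | FinStratProf.node _ Choice.d sd _ => fpayoff sd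
  | FinStratProf.node _ Choice.r _ sr => fpayoff sr

/-- The game of a finite strategy profile (erasing the choices). -/
def fgame : FinStratProf → FinGame
  | FinStratProf.leaf f => FinGame.leaf f
  | FinStratProf.node p _ sd sr => FinGame.node p (fgame sd) (fgame sr)

/-- Backward induction for finite strategy profiles. -/
inductive BI : FinStratProf → Prop
  | leaf (f : Payoffs) : BI (FinStratProf.leaf f)
  | node (p : Agent) (c : Choice) (sd sr : FinStratProf) :
      BI sd → BI sr →
      (c = Choice.d → fpayoff sd p ≥ fpayoff sr p) →
      (c = Choice.r → fpayoff sr p ≥ fpayoff sd p) →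
      BI (FinStratProf.node p c sd sr)

/-- The family `F01` of finite truncations of the 0,1-game (cut after `B`). -/
inductive F01 : FinGame → Prop
  | base : F01 (FinGame.leaf f01)
  | step (g : FinGame) : F01 g →
      F01 (FinGame.node Agent.A (FinGame.leaf f01) (FinGame.node Agent.B (FinGame.leaf f10) g))

/-- `SF01`: agent B always continues, agent A does whatever she likes. -/
inductive SF01 : FinStratProf → Prop
  | base : SF01 (FinStratProf.leaf f01)
  | step (c : Choice) (s' : FinStratProf) : SF01 s' →
      SF01 (FinStratProf.node Agent.A c (FinStratProf.leaf f01)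
        (FinStratProf.node Agent.B Choice.r (FinStratProf.leaf f10) s'))

mutual
  /-- The family `K01` of finite truncations of the 0,1-game (cut after `A`). -/
  inductive K01 : FinGame → Prop
    | step (g : FinGame) : K01' g → K01 (FinGame.node Agent.A (FinGame.leaf f01) g)
  /-- The auxiliary family `K01'`. -/
  inductive K01' : FinGame → Prop
    | base : K01' (FinGame.leaf f10)
    | step (g : FinGame) : K01 g → K01' (FinGame.node Agent.B (FinGame.leaf f10) g)
end

mutual
  /-- `SK01`: agent A always continues, agent B does whatever she likes. -/
  inductive SK01 : FinStratProf → Prop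
    | step (s' : FinStratProf) : SK01' s' →
        SK01 (FinStratProf.node Agent.A Choice.r (FinStratProf.leaf f01) s')
  /-- The auxiliary predicate `SK01'`. -/
  inductive SK01' : FinStratProf → Prop
    | base : SK01' (FinStratProf.leaf f10)
    | step (c : Choice) (s' : FinStratProf) : SK01 s' →
        SK01' (FinStratProf.node Agent.B c (FinStratProf.leaf f10) s')
end

section Aux

lemma sleaf_inj {f g : Payoffs} (h : sleaf f = sleaf g) : f = g := by
  have h2 := congrArg PFunctor.M.dest h
  erw [sleaf, sleaf, PFunctor.M.dest_mk, PFunctor.M.dest_mk] at h2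
  injection h2 with h3 _
  injection h3

lemma sleaf_ne_snode {f : Payoffs} {p c sd sr} : sleaf f ≠ snode p c sd sr := by
  intro h
  have h2 := congrArg PFunctor.M.dest h
  erw [sleaf, snode, PFunctor.M.dest_mk, PFunctor.M.dest_mk] at h2
  injection h2 with h3 _
  cases h3

lemma snode_inj {p c sd sr p' c' sd' sr'} (h : snode p c sd sr = snode p' c' sd' sr') :
    p = p' ∧ c = c' ∧ sd = sd' ∧ sr = sr' := by
  have h2 := congrArg PFunctor.M.dest h
  erw [snode, snode, PFunctor.M.dest_mk, PFunctor.M.dest_mk] at h2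
  injection h2 with h3 h4
  injection h3 with h5
  have hp : p = p' := congrArg Prod.fst h5
  have hc : c = c' := congrArg Prod.snd h5
  have h6 : (fun (b : Bool) => if b then sd else sr) =
      (fun (b : Bool) => if b then sd' else sr') := h4
  exact ⟨hp, hc, by simpa using congrFun h6 true, by simpa using congrFun h6 false⟩

/-- The agent of a parity. -/
def ag : Bool → Agent
  | true => Agent.A
  | false => Agent.B

/-- The leaf payoff of a parity. -/
def lf : Bool → Payoffs
  | true => f01
  | false => f10

lemma acbes_sleaf (f : Payoffs) : AcBes (sleaf f) :=
  fun _ hR => hR _ (fun _ _ _ _ heq => absurd heq sleaf_ne_snode)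

lemma bcaes_sleaf (f : Payoffs) : BcAes (sleaf f) :=
  fun _ hR => hR _ (fun _ _ _ _ heq => absurd heq sleaf_ne_snode)

/-- The chain of tails of a 0,1-game strategy profile. -/
noncomputable def chainSeq (R : Bool → StratProf → Prop)
    (key : ∀ j t, R j t → ∃ c s', t = snode (ag j) c (sleaf (lf j)) s' ∧ R (!j) s')
    (i : Bool) (s : StratProf) (h0 : R i s) : ℕ → Σ' (j : Bool) (t : StratProf), R j t
  | 0 => ⟨i, s, h0⟩
  | n+1 =>
      ⟨!(chainSeq R key i s h0 n).1,
       (key _ _ (chainSeq R key i s h0 n).2.2).choose_spec.choose,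
       (key _ _ (chainSeq R key i s h0 n).2.2).choose_spec.choose_spec.2⟩

lemma S01_chain {i : Bool} {s : StratProf} (h : S01 i s) :
    ∃ (t : ℕ → StratProf) (b : ℕ → Bool) (ch : ℕ → Choice),
      t 0 = s ∧ ∀ n, t n = snode (ag (b n)) (ch n) (sleaf (lf (b n))) (t (n+1)) := by
  obtain ⟨R, hRs, hT, hF⟩ := h
  have key : ∀ j t, R j t → ∃ c s', t = snode (ag j) c (sleaf (lf j)) s' ∧ R (!j) s' := by
    intro j t h
    cases j
    · simpa [ag, lf] using hF t h
    · simpa [ag, lf] using hT t h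
  refine ⟨fun n => (chainSeq R key i s hRs n).2.1, fun n => (chainSeq R key i s hRs n).1,
    fun n => (key _ _ (chainSeq R key i s hRs n).2.2).choose, rfl, fun n => ?_⟩
  have hs := (key _ _ (chainSeq R key i s hRs n).2.2).choose_spec.choose_spec.1
  have hn1 : (chainSeq R key i s hRs (n+1)).2.1 =
      (key _ _ (chainSeq R key i s hRs n).2.2).choose_spec.choose := by
    simp [chainSeq]
  beta_reduce
  rw [hn1]
  exact hs

end Aux

/-- for profiles of the 0,1-game, `SPE s` implies `SAcBes s ∨ SBcAes s`. -/
theorem sacbes_or_sbcaes_of_spe :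
    ∀ s : StratProf, (S0 s ∨ S1 s) → SPE s → SAcBes s ∨ SBcAes s := by
  classical
  intro s hS hspe
  have hS01 : ∃ i, S01 i s := by rcases hS with h | h; exacts [⟨true, h⟩, ⟨false, h⟩]
  obtain ⟨i, hS⟩ := hS01
  obtain ⟨t, b, ch, ht0, hteq⟩ := S01_chain hS
  -- SPE at every tail
  obtain ⟨Rb, hRbs, hRbstep⟩ := hspe
  have hRall : ∀ n, Rb (t n) := by
    intro n
    induction n with
    | zero => rwa [ht0]
    | succ n ih => exact ((hRbstep _ ih).2 _ _ _ _ (hteq n)).2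
  have h_pe : ∀ n, PE (t n) := fun n => (hRbstep _ (hRall n)).1
  -- there is always a later `d`
  have hd_exists : ∀ n, ∃ k, n ≤ k ∧ ch k = Choice.d := by
    intro n
    have hconv : Conv (t n) := by
      obtain ⟨Rc, hRc, hRcstep⟩ := (h_pe n).1
      rcases hRcstep _ hRc with ⟨f, hf⟩ | ⟨p, c, sd, sr, _, hcv, _, _⟩
      · exact absurd (hf.symm.trans (hteq n)) sleaf_ne_snode
      · exact hcv
    have gen : ∀ u, Conv u → ∀ m, u = t m → ∃ k, m ≤ k ∧ ch k = Choice.d := by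
      intro u hu
      induction hu with
      | leaf f => intro m hm; exact absurd (hm.trans (hteq m)) sleaf_ne_snode
      | down p sd sr h ihh =>
        intro m hm
        have h2 := snode_inj (hm.trans (hteq m))
        exact ⟨m, le_refl m, h2.2.1.symm⟩
      | right p sd sr h ihh =>
        intro m hm
        have h2 := snode_inj (hm.trans (hteq m))
        obtain ⟨k, hk1, hk2⟩ := ihh (m+1) h2.2.2.2
        exact ⟨k, by omega, hk2⟩
    exact gen _ hconv n rfl
  -- payoff of a tail, given the first later `d`
  have h_pay : ∀ j n, ch (n+j) = Choice.d → (∀ m, m < j → ch (n+m) = Choice.r) →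
      PayoffRel (t n) (lf (b (n+j))) := by
    intro j
    induction j with
    | zero =>
      intro n hd _
      simp only [Nat.add_zero] at hd ⊢
      rw [hteq n, hd]
      exact PayoffRel.down _ _ _ _ (PayoffRel.leaf _)
    | succ j ih =>
      intro n hd hr
      have hcn : ch n = Choice.r := by simpa using hr 0 (Nat.succ_pos j)
      rw [show n + (j+1) = (n+1) + j by omega] at hd ⊢
      rw [hteq n, hcn]
      exact PayoffRel.right _ _ _ _ (ih (n+1) hd (fun m hm => by
        rw [show n+1+m = n+(m+1) by omega]; exact hr (m+1) (by omega)))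
  have zero_ge_one : ¬ ((0:ℝ) ≥ 1) := by norm_num
  have lf_self : ∀ j, lf j (ag j) = 0 := by
    intro j; cases j <;> simp [lf, ag, f01, f10]
  have lf_not : ∀ j j', j' ≠ j → lf j' (ag j) = 1 := by
    intro j j' hne
    cases j <;> cases j' <;> first
      | exact absurd rfl hne
      | norm_num [lf, ag, f01, f10]
  -- the next `d` after a `d` has the same parity
  have next_same : ∀ k k', ch k = Choice.d → k < k' → ch k' = Choice.d →
      (∀ m, k < m → m < k' → ch m = Choice.r) → b k' = b k := by
    intro k k' hk hlt hk' hbetween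
    by_contra hne
    have hpayr : PayoffRel (t (k+1)) (lf (b k')) := by
      have h1 : ch (k+1 + (k' - (k+1))) = Choice.d := by
        rw [show k+1+(k'-(k+1)) = k' by omega]; exact hk'
      have h2 : ∀ m, m < k' - (k+1) → ch (k+1+m) = Choice.r :=
        fun m hm => hbetween (k+1+m) (by omega) (by omega)
      have h3 := h_pay _ _ h1 h2
      rwa [show k+1+(k'-(k+1)) = k' by omega] at h3
    have hge := (h_pe k).2.1 (ag (b k)) (sleaf (lf (b k))) (t (k+1)) (lf (b k)) (lf (b k'))
      (by rw [← hk]; exact hteq k) (PayoffRel.leaf _) hpayr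
    rw [lf_self, lf_not _ _ hne] at hge
    exact zero_ge_one hge
  -- all `d`s have the same parity
  have same_b : ∀ m k j, ch k = Choice.d → ch j = Choice.d → k ≤ j → j - k ≤ m → b j = b k := by
    intro m
    induction m with
    | zero =>
      intro k j _ _ h1 h2
      have : j = k := by omega
      rw [this]
    | succ m ih =>
      intro k j hk hj hle hdiff
      rcases eq_or_lt_of_le hle with heq | hlt
      · rw [← heq]
      · have hex : ∃ x, k < x ∧ ch x = Choice.d := ⟨j, hlt, hj⟩
        obtain ⟨hk₁gt, hk₁d⟩ := Nat.find_spec hex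
        have hk₁le : Nat.find hex ≤ j := Nat.find_min' hex ⟨hlt, hj⟩
        have hbet : ∀ x, k < x → x < Nat.find hex → ch x = Choice.r := by
          intro x h1 h2
          have h3 := Nat.find_min hex h2
          cases hcx : ch x
          · exact absurd ⟨h1, hcx⟩ h3
          · rfl
        have hb1 : b (Nat.find hex) = b k := next_same k _ hk hk₁gt hk₁d hbet
        rcases eq_or_lt_of_le hk₁le with heq2 | hlt2
        · rw [← heq2]; exact hb1
        · rw [ih _ j hk₁d hj (le_of_lt hlt2) (by omega), hb1]
  obtain ⟨k₀, _, hk₀d⟩ := hd_exists 0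
  have hall : ∀ k, ch k = Choice.d → b k = b k₀ := by
    intro k hkd
    rcases le_total k k₀ with h | h
    · exact (same_b k₀ k k₀ hkd hk₀d h (by omega)).symm
    · exact same_b k k₀ k hk₀d hkd h (by omega)
  -- generic induction principle: stopping side vs continuing side
  have main : ∀ (R : StratProf → Prop),
      (∀ m, b m = b k₀ → (ch m = Choice.d ∨ R (t (m+1))) → R (t m)) →
      (∀ m, b m ≠ b k₀ → (ch m = Choice.r ∧ R (t (m+1))) → R (t m)) →
      ∀ n, R (t n) := by
    intro R hstop hcont
    have H : ∀ m n, (∃ k, n ≤ k ∧ k ≤ n + m ∧ ch k = Choice.d) → R (t n) := by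
      intro m
      induction m with
      | zero =>
        rintro n ⟨k, h1, h2, h3⟩
        have hkn : k = n := by omega
        subst hkn
        exact hstop k (hall k h3) (Or.inl h3)
      | succ m ih =>
        rintro n ⟨k, h1, h2, h3⟩
        by_cases hcn : ch n = Choice.d
        · exact hstop n (hall n hcn) (Or.inl hcn)
        · have hcr : ch n = Choice.r := by
            cases hx : ch n
            · exact absurd hx hcn
            · rfl
          have hne : k ≠ n := fun he => hcn (he ▸ h3)
          have hR1 : R (t (n+1)) := ih (n+1) ⟨k, by omega, by omega, h3⟩
          by_cases hbn : b n = b k₀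
          · exact hstop n hbn (Or.inr hR1)
          · exact hcont n hbn ⟨hcr, hR1⟩
    intro n
    obtain ⟨k, hk1, hk2⟩ := hd_exists n
    exact H (k - n) n ⟨k, hk1, by omega, hk2⟩
  -- generic Box construction
  have boxgen : ∀ Φ : StratProf → Prop, (∀ n, Φ (t n)) → (∀ f, Φ (sleaf f)) → Box Φ s := by
    intro Φ h1 h2
    refine ⟨fun u => (∃ n, u = t n) ∨ (∃ f, u = sleaf f), Or.inl ⟨0, ht0.symm⟩, ?_⟩
    rintro u (⟨n, rfl⟩ | ⟨f, rfl⟩)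
    · refine ⟨h1 n, ?_⟩
      intro p c sd sr heq
      have h3 := snode_inj ((hteq n).symm.trans heq)
      exact ⟨Or.inr ⟨_, h3.2.2.1.symm⟩, Or.inl ⟨n+1, h3.2.2.2.symm⟩⟩
    · exact ⟨h2 f, fun p c sd sr heq => absurd heq sleaf_ne_snode⟩
  cases hβ : b k₀ with
  | false =>
    -- B is the stopping agent : A continues and B eventually stops
    left
    refine boxgen AcBes (fun n => ?_) acbes_sleaf
    intro R hR
    refine main (fun u => R u) ?_ ?_ n
    · intro m hbm hor
      apply hR
      intro p c f s' heq
      have h3 := snode_inj ((hteq m).symm.trans heq)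
      rw [hβ] at hbm
      right
      refine ⟨?_, ?_, ?_⟩
      · rw [← h3.1, hbm]; rfl
      · rw [← sleaf_inj h3.2.2.1, hbm]; rfl
      · rcases hor with hd | hr
        · exact Or.inl (h3.2.1 ▸ hd)
        · exact Or.inr (h3.2.2.2 ▸ hr)
    · intro m hbm hand
      apply hR
      intro p c f s' heq
      have h3 := snode_inj ((hteq m).symm.trans heq)
      rw [hβ] at hbm
      have hbm' : b m = true := by
        cases hx : b m
        · exact absurd hx hbm
        · rfl
      left
      refine ⟨?_, ?_, ?_, ?_⟩
      · rw [← h3.1, hbm']; rfl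
      · rw [← sleaf_inj h3.2.2.1, hbm']; rfl
      · exact h3.2.1 ▸ hand.1
      · exact h3.2.2.2 ▸ hand.2
  | true =>
    -- A is the stopping agent : B continues and A eventually stops
    right
    refine boxgen BcAes (fun n => ?_) bcaes_sleaf
    intro R hR
    refine main (fun u => R u) ?_ ?_ n
    · intro m hbm hor
      apply hR
      intro p c f s' heq
      have h3 := snode_inj ((hteq m).symm.trans heq)
      rw [hβ] at hbm
      right
      refine ⟨?_, ?_, ?_⟩
      · rw [← h3.1, hbm]; rfl
      · rw [← sleaf_inj h3.2.2.1, hbm]; rfl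
      · rcases hor with hd | hr
        · exact Or.inl (h3.2.1 ▸ hd)
        · exact Or.inr (h3.2.2.2 ▸ hr)
    · intro m hbm hand
      apply hR
      intro p c f s' heq
      have h3 := snode_inj ((hteq m).symm.trans heq)
      rw [hβ] at hbm
      have hbm' : b m = false := by
        cases hx : b m
        · rfl
        · exact absurd hx hbm
      left
      refine ⟨?_, ?_, ?_, ?_⟩
      · rw [← h3.1, hbm']; rfl
      · rw [← sleaf_inj h3.2.2.1, hbm']; rfl
      · exact h3.2.1 ▸ hand.1
      · exact h3.2.2.2 ▸ hand.2
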